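/- Let S be a nonempty closed convex subset of ℝ^{d1×d2} (with the Frobenius inner product), let f be convex and differentiable with ‖∇f(X) − ∇f(Y)‖_F ≤ L‖X−Y‖_F for all X, Y (L > 0), and let M̂ be a minimizer of f over S. If M_k ∈ S and M_{k+1} = Π_S(M_k − (1/L)∇f(M_k)), then f(M_{k+1}) − f(M̂) ≤ (L/2)(‖M_k − M̂‖_F² − ‖M_{k+1} − M̂‖_F²). -/

import Mathlib

open Real

variable {E : Type*} [NormedAddCommGroup E] [InnerProductSpace ℝ E] [CompleteSpace E]

local notation "⟪" x ", " y "⟫" => @inner ℝ _ _ x y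

lemma line_hasDerivAt (f : E → ℝ) (f' : E → E) (hgrad : ∀ x, HasGradientAt f (f' x) x)
    (a b : E) (t : ℝ) :
    HasDerivAt (fun s : ℝ => f (a + s • (b - a))) ⟪f' (a + t • (b - a)), b - a⟫ t := by
  have hline : HasDerivAt (fun s : ℝ => a + s • (b - a)) (b - a) t := by
    simpa using ((hasDerivAt_id t).smul_const (b - a)).const_add a
  have := ((hgrad (a + t • (b - a))).hasFDerivAt.comp_hasDerivAt t hline)
  simp at this
  exact this

lemma convex_grad_ineq (f : E → ℝ) (f' : E → E) (hf : ConvexOn ℝ Set.univ f)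
    (hgrad : ∀ x, HasGradientAt f (f' x) x) (a b : E) :
    ⟪f' a, b - a⟫ ≤ f b - f a := by
  have hφ : ConvexOn ℝ Set.univ (fun s : ℝ => f (a + s • (b - a))) := by
    have := hf.comp_affineMap (AffineMap.lineMap a b)
    simpa [Function.comp_def, AffineMap.lineMap_apply, vsub_eq_sub, vadd_eq_add, add_comm] using this
  have hd := line_hasDerivAt f f' hgrad a b 0
  simp only [zero_smul, add_zero] at hd
  have := hφ.le_slope_of_hasDerivAt (Set.mem_univ (0:ℝ)) (Set.mem_univ (1:ℝ)) one_pos hd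
  simpa [slope] using this

lemma descent_lemma (f : E → ℝ) (f' : E → E)
    (hgrad : ∀ x, HasGradientAt f (f' x) x) (L : ℝ) (hL : 0 < L)
    (hlip : ∀ x y, ‖f' x - f' y‖ ≤ L * ‖x - y‖) (a b : E) :
    f b ≤ f a + ⟪f' a, b - a⟫ + L / 2 * ‖b - a‖ ^ 2 := by
  set ψ : ℝ → ℝ := fun t => f (a + t • (b - a)) - t * ⟪f' a, b - a⟫ - L / 2 * t ^ 2 * ‖b - a‖ ^ 2
    with hψ
  have hder : ∀ t : ℝ, HasDerivAt ψ
      (⟪f' (a + t • (b - a)), b - a⟫ - ⟪f' a, b - a⟫ - L * t * ‖b - a‖ ^ 2) t := by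
    intro t
    have h1 := line_hasDerivAt f f' hgrad a b t
    have h2 : HasDerivAt (fun t : ℝ => t * ⟪f' a, b - a⟫) ⟪f' a, b - a⟫ t := by
      simpa using (hasDerivAt_id t).mul_const ⟪f' a, b - a⟫
    have h3 : HasDerivAt (fun t : ℝ => L / 2 * t ^ 2 * ‖b - a‖ ^ 2)
        (L * t * ‖b - a‖ ^ 2) t := by
      have : HasDerivAt (fun t : ℝ => t ^ 2) (2 * t) t := by
        simpa using hasDerivAt_pow 2 t
      have := (this.const_mul (L / 2)).mul_const (‖b - a‖ ^ 2)
      rw [show L * t * ‖b - a‖ ^ 2 = L / 2 * (2 * t) * ‖b - a‖ ^ 2 by ring]; exact this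
    have := (h1.sub h2).sub h3
    exact this
  have hmono : AntitoneOn ψ (Set.Icc 0 1) := by
    apply antitoneOn_of_deriv_nonpos (convex_Icc 0 1)
    · exact (Differentiable.continuous (fun t => (hder t).differentiableAt)).continuousOn
    · exact fun t _ => (hder t).differentiableAt.differentiableWithinAt
    intro t ht
    rw [(hder t).deriv]
    rw [interior_Icc] at ht
    have h1 : ⟪f' (a + t • (b - a)) - f' a, b - a⟫ ≤ ‖f' (a + t • (b - a)) - f' a‖ * ‖b - a‖ :=
      real_inner_le_norm _ _
    have h2 : ‖f' (a + t • (b - a)) - f' a‖ ≤ L * ‖(a + t • (b - a)) - a‖ := hlip _ _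
    have h3 : ‖(a + t • (b - a)) - a‖ = t * ‖b - a‖ := by
      rw [add_sub_cancel_left, norm_smul]
      simp [abs_of_nonneg ht.1.le]
    rw [h3] at h2
    have h4 := mul_le_mul_of_nonneg_right h2 (norm_nonneg (b - a))
    have hsub := inner_sub_left (𝕜 := ℝ) (f' (a + t • (b - a))) (f' a) (b - a)
    nlinarith [h1, h4, hsub]
  have key := hmono (Set.left_mem_Icc.2 zero_le_one) (Set.right_mem_Icc.2 zero_le_one) zero_le_one
  have h0 : ψ 0 = f a := by simp [hψ]
  have h1 : ψ 1 = f b - ⟪f' a, b - a⟫ - L / 2 * ‖b - a‖ ^ 2 := by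
    simp [hψ]
  rw [h0, h1] at key
  linarith

lemma proj_char {S : Set E} (hconv : Convex ℝ S) {u v : E} (hv : v ∈ S)
    (hproj : ∀ x ∈ S, ‖v - u‖ ≤ ‖x - u‖) : ∀ x ∈ S, ⟪u - v, x - v⟫ ≤ 0 := by
  haveI : Nonempty S := ⟨⟨v, hv⟩⟩
  have heq : ‖u - v‖ = ⨅ w : S, ‖u - w‖ := by
    apply le_antisymm
    · exact le_ciInf fun w => by
        rw [norm_sub_rev u v, norm_sub_rev u w]; exact hproj w w.2
    · have hb : BddBelow (Set.range fun w : S => ‖u - (w : E)‖) :=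
        ⟨0, by rintro r ⟨w, rfl⟩; exact norm_nonneg _⟩
      exact ciInf_le hb ⟨v, hv⟩
  exact (norm_eq_iInf_iff_real_inner_le_zero hconv hv).1 heq

/-- One-step progress of projected gradient descent: if `M_{k+1} = Π_S(M_k − (1/L)∇f(M_k))`
with `M_k ∈ S` and `M̂` minimizes `f` over `S`, then
`f(M_{k+1}) − f(M̂) ≤ (L/2)(‖M_k − M̂‖² − ‖M_{k+1} − M̂‖²)`. -/
theorem projected_gradient_one_step (d1 d2 : ℕ)
    (S : Set (EuclideanSpace ℝ (Fin d1 × Fin d2)))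
    (hne : S.Nonempty) (hcl : IsClosed S) (hconv : Convex ℝ S)
    (f : EuclideanSpace ℝ (Fin d1 × Fin d2) → ℝ)
    (f' : EuclideanSpace ℝ (Fin d1 × Fin d2) → EuclideanSpace ℝ (Fin d1 × Fin d2))
    (hf : ConvexOn ℝ Set.univ f)
    (hgrad : ∀ x, HasGradientAt f (f' x) x)
    (L : ℝ) (hL : 0 < L)
    (hlip : ∀ x y, ‖f' x - f' y‖ ≤ L * ‖x - y‖)
    (Mhat : EuclideanSpace ℝ (Fin d1 × Fin d2))
    (hMhatS : Mhat ∈ S) (hMhatmin : ∀ x ∈ S, f Mhat ≤ f x)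
    (Mk Mk1 : EuclideanSpace ℝ (Fin d1 × Fin d2)) (hMk : Mk ∈ S)
    (hMk1S : Mk1 ∈ S)
    (hMk1proj : ∀ x ∈ S, ‖Mk1 - (Mk - (1 / L) • f' Mk)‖ ≤ ‖x - (Mk - (1 / L) • f' Mk)‖) :
    f Mk1 - f Mhat ≤ L / 2 * (‖Mk - Mhat‖ ^ 2 - ‖Mk1 - Mhat‖ ^ 2) := by
  set g := f' Mk with hg
  -- descent lemma
  have hdesc : f Mk1 ≤ f Mk + ⟪g, Mk1 - Mk⟫ + L / 2 * ‖Mk1 - Mk‖ ^ 2 :=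
    descent_lemma f f' hgrad L hL hlip Mk Mk1
  -- convexity
  have hcvx : ⟪g, Mhat - Mk⟫ ≤ f Mhat - f Mk := convex_grad_ineq f f' hf hgrad Mk Mhat
  -- projection
  have hpc := proj_char hconv hMk1S hMk1proj Mhat hMhatS
  -- rewrite projection inequality
  have hproj2 : ⟪g, Mk1 - Mhat⟫ ≤ L * ⟪Mk - Mk1, Mk1 - Mhat⟫ := by
    have hexp : (Mk - (1 / L) • g) - Mk1 = (Mk - Mk1) - (1 / L) • g := by abel
    rw [hexp, inner_sub_left, inner_smul_left] at hpc
    have hL' : (1 : ℝ) / L > 0 := by positivity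
    have h2 : ⟪g, Mhat - Mk1⟫ ≥ L * ⟪Mk - Mk1, Mhat - Mk1⟫ := by
      simp only [conj_trivial] at hpc
      have h6 : ⟪Mk - Mk1, Mhat - Mk1⟫ ≤ ⟪g, Mhat - Mk1⟫ / L := by
        rw [← one_div_mul_eq_div]; linarith
      have := (le_div_iff₀ hL).1 h6
      linarith
    have e1 : ⟪g, Mk1 - Mhat⟫ = -⟪g, Mhat - Mk1⟫ := by
      rw [← neg_sub Mhat Mk1, inner_neg_right]
    have e2 : ⟪Mk - Mk1, Mk1 - Mhat⟫ = -⟪Mk - Mk1, Mhat - Mk1⟫ := by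
      rw [← neg_sub Mhat Mk1, inner_neg_right]
    rw [e1, e2]; linarith
  -- norm identity
  have hid : ‖Mk - Mhat‖ ^ 2 =
      ‖Mk - Mk1‖ ^ 2 + 2 * ⟪Mk - Mk1, Mk1 - Mhat⟫ + ‖Mk1 - Mhat‖ ^ 2 := by
    have : Mk - Mhat = (Mk - Mk1) + (Mk1 - Mhat) := by abel
    rw [this, norm_add_sq_real]
  have hns : ‖Mk1 - Mk‖ ^ 2 = ‖Mk - Mk1‖ ^ 2 := by rw [norm_sub_rev]
  have hinner : ⟪g, Mk1 - Mk⟫ + ⟪g, Mk - Mhat⟫ = ⟪g, Mk1 - Mhat⟫ := by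
    rw [← inner_add_right]; congr 1; abel
  have hid2 : L / 2 * (‖Mk - Mhat‖ ^ 2 - ‖Mk1 - Mhat‖ ^ 2)
      = L * ⟪Mk - Mk1, Mk1 - Mhat⟫ + L / 2 * ‖Mk - Mk1‖ ^ 2 := by
    rw [hid]; ring
  have e3 : ⟪g, Mhat - Mk⟫ = -⟪g, Mk - Mhat⟫ := by
    rw [← neg_sub Mk Mhat, inner_neg_right]
  have hns2 : L / 2 * ‖Mk1 - Mk‖ ^ 2 = L / 2 * ‖Mk - Mk1‖ ^ 2 := by rw [norm_sub_rev]
  linarith [hdesc, hcvx, hproj2, hid2, hns2, hinner, e3]
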